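/- Let Γ be a distance-regular graph of diameter 3 with c₂ = 1 whose second largest eigenvalue equals a₃ and with b(Γ) = a₃ - a₁ = 2 (so k = 2a₃). Then a₃ ∈ {2, 3}; i.e., (a₁+1) divides k and a₃ ≤ 3. -/

import Mathlib

open Finset SimpleGraph

/-- `G` is a distance-regular graph with diameter `D` and intersection numbers
`b i`, `c i`, `a i` (so valency `k = b 0` and `a i = k - b i - c i`). -/
structure IsDRG {V : Type*} [Fintype V] (G : SimpleGraph V) (D : ℕ)
    (b c a : ℕ → ℕ) : Prop where
  connected : G.Connected
  le_diam : ∀ x y : V, G.dist x y ≤ D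
  exists_diam : ∃ x y : V, G.dist x y = D
  card_b : ∀ i, i ≤ D → ∀ x y : V, G.dist x y = i →
      Nat.card {z : V | G.Adj y z ∧ G.dist x z = i + 1} = b i
  card_c : ∀ i, i ≤ D → ∀ x y : V, G.dist x y = i →
      Nat.card {z : V | G.Adj y z ∧ G.dist x z = i - 1} = c i
  card_a : ∀ i, i ≤ D → ∀ x y : V, G.dist x y = i →
      Nat.card {z : V | G.Adj y z ∧ G.dist x z = i} = a i

/-- `θ` is an eigenvalue of the adjacency matrix of `G`. -/
def IsEig {V : Type*} [Fintype V] [DecidableEq V] (G : SimpleGraph V)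
    [DecidableRel G.Adj] (θ : ℝ) : Prop :=
  ∃ v : V → ℝ, v ≠ 0 ∧ (G.adjMatrix ℝ).mulVec v = θ • v

/-- `θ` is the second largest eigenvalue of `G` (`k` being the largest). -/
def IsSecondLargestEig {V : Type*} [Fintype V] [DecidableEq V] (G : SimpleGraph V)
    [DecidableRel G.Adj] (k θ : ℝ) : Prop :=
  IsEig G θ ∧ θ < k ∧ ∀ η : ℝ, IsEig G η → η ≠ k → η ≤ θ

/-- `θ` is the smallest eigenvalue of `G`. -/
def IsSmallestEig {V : Type*} [Fintype V] [DecidableEq V] (G : SimpleGraph V)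
    [DecidableRel G.Adj] (θ : ℝ) : Prop :=
  IsEig G θ ∧ ∀ η : ℝ, IsEig G η → θ ≤ η

/-- The multiplicity of `θ` as an eigenvalue of the adjacency matrix of `G`. -/
noncomputable def eigMult {V : Type*} [Fintype V] [DecidableEq V] (G : SimpleGraph V)
    [DecidableRel G.Adj] (θ : ℝ) : ℕ :=
  Module.finrank ℝ ↥(Module.End.eigenspace (Matrix.toLin' (G.adjMatrix ℝ)) θ)

/-- A Shilla distance-regular graph: diameter `3` and second largest eigenvalue `a 3`. -/
structure IsShilla {V : Type*} [Fintype V] [DecidableEq V] (G : SimpleGraph V)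
    [DecidableRel G.Adj] (b c a : ℕ → ℕ) : Prop where
  drg : IsDRG G 3 b c a
  second : IsSecondLargestEig G (b 0) ((a 3 : ℝ))


lemma natCard_set_eq' {V : Type*} [Fintype V] (p : V → Prop) [DecidablePred p] :
    Nat.card {z : V | p z} = (univ.filter p).card := by
  rw [Nat.card_eq_fintype_card]
  convert Fintype.card_subtype p
  exact Iff.rfl

section Aux
variable {V : Type*} [Fintype V] [DecidableEq V] {G : SimpleGraph V} [DecidableRel G.Adj]
  {b c a : ℕ → ℕ}

lemma partA (hG : IsDRG G 3 b c a) (hc2 : c 2 = 1) : (a 1 + 1) ∣ b 0 := by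
  obtain ⟨x⟩ := hG.connected.nonempty
  set N := G.neighborFinset x with hN
  have hmemN : ∀ z, z ∈ N ↔ G.Adj x z := fun z => G.mem_neighborFinset x z
  -- N.card = b 0
  have hk : N.card = b 0 := by
    have h := hG.card_b 0 (by norm_num) x x (G.dist_self)
    rw [natCard_set_eq'] at h
    rw [← h]
    congr 1
    ext z
    rw [hmemN, Finset.mem_filter]
    constructor
    · intro hz
      exact ⟨Finset.mem_univ z, hz, SimpleGraph.dist_eq_one_iff_adj.2 hz⟩
    · rintro ⟨-, hz, -⟩
      exact hz
  -- key transitivity using c₂ = 1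
  have hadj_trans : ∀ y z w, y ∈ N → z ∈ N → w ∈ N →
      G.Adj y z → G.Adj z w → y ≠ w → G.Adj y w := by
    intro y z w hy hz hw hyz hzw hne
    by_contra hna
    have hxy : G.Adj x y := (hmemN y).1 hy
    have hxz : G.Adj x z := (hmemN z).1 hz
    have hxw : G.Adj x w := (hmemN w).1 hw
    have hd2 : G.dist y w = 2 := by
      have hle : G.dist y w ≤ 2 := by
        calc G.dist y w ≤ G.dist y z + G.dist z w := hG.connected.dist_triangle
        _ ≤ 2 := by
            rw [SimpleGraph.dist_eq_one_iff_adj.2 hyz, SimpleGraph.dist_eq_one_iff_adj.2 hzw]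
      have h0 : G.dist y w ≠ 0 := fun h => hne (hG.connected.dist_eq_zero_iff.1 h)
      have h1 : G.dist y w ≠ 1 := fun h => hna (SimpleGraph.dist_eq_one_iff_adj.1 h)
      omega
    have h := hG.card_c 2 (by norm_num) y w hd2
    rw [natCard_set_eq'] at h
    have hsub : ({x, z} : Finset V) ⊆ univ.filter (fun u => G.Adj w u ∧ G.dist y u = 2 - 1) := by
      intro u hu
      simp only [Finset.mem_insert, Finset.mem_singleton] at hu
      rcases hu with rfl | rfl
      · simp only [Finset.mem_filter, Finset.mem_univ, true_and]
        exact ⟨hxw.symm, SimpleGraph.dist_eq_one_iff_adj.2 hxy.symm⟩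
      · simp only [Finset.mem_filter, Finset.mem_univ, true_and]
        exact ⟨hzw.symm, SimpleGraph.dist_eq_one_iff_adj.2 hyz⟩
    have : 2 ≤ (univ.filter (fun u => G.Adj w u ∧ G.dist y u = 2 - 1)).card := by
      calc 2 = ({x, z} : Finset V).card := (Finset.card_pair hxz.ne).symm
      _ ≤ _ := Finset.card_le_card hsub
    omega
  have hrtrans : ∀ y z w, y ∈ N → z ∈ N → w ∈ N → (z = y ∨ G.Adj y z) →
      (w = z ∨ G.Adj z w) → (w = y ∨ G.Adj y w) := by
    rintro y z w hy hz hw (rfl | h1) h2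
    · exact h2
    rcases h2 with rfl | h2
    · exact Or.inr h1
    by_cases hyw : y = w
    · exact Or.inl hyw.symm
    · exact Or.inr (hadj_trans y z w hy hz hw h1 h2 hyw)
  have hrsymm : ∀ y z : V, (z = y ∨ G.Adj y z) → (y = z ∨ G.Adj z y) := by
    rintro y z (rfl | h)
    · exact Or.inl rfl
    · exact Or.inr h.symm
  -- classes
  set C : V → Finset V := fun y => N.filter (fun z => z = y ∨ G.Adj y z) with hC
  have hmemC : ∀ y z, z ∈ C y ↔ (z ∈ N ∧ (z = y ∨ G.Adj y z)) := by
    intro y z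
    rw [hC]
    exact Finset.mem_filter
  have hCsub : ∀ y, C y ⊆ N := fun y => Finset.filter_subset _ _
  have hCself : ∀ y ∈ N, y ∈ C y := fun y hy => (hmemC y y).2 ⟨hy, Or.inl rfl⟩
  have hCcard : ∀ y ∈ N, (C y).card = a 1 + 1 := by
    intro y hy
    have hxy : G.Adj x y := (hmemN y).1 hy
    have h := hG.card_a 1 (by norm_num) x y (SimpleGraph.dist_eq_one_iff_adj.2 hxy)
    rw [natCard_set_eq'] at h
    have heq : C y = insert y (univ.filter (fun z => G.Adj y z ∧ G.dist x z = 1)) := by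
      ext z
      rw [hmemC, Finset.mem_insert, Finset.mem_filter]
      constructor
      · rintro ⟨hzN, rfl | hz2⟩
        · exact Or.inl rfl
        · exact Or.inr ⟨Finset.mem_univ z, hz2,
            SimpleGraph.dist_eq_one_iff_adj.2 ((hmemN z).1 hzN)⟩
      · rintro (rfl | ⟨-, h1, h2⟩)
        · exact ⟨hy, Or.inl rfl⟩
        · exact ⟨(hmemN z).2 (SimpleGraph.dist_eq_one_iff_adj.1 h2), Or.inr h1⟩
    rw [heq, Finset.card_insert_of_notMem, h]
    simp only [Finset.mem_filter]
    rintro ⟨-, h1, -⟩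
    exact G.irrefl h1
  -- distinct classes are disjoint
  have hCdisj : ∀ y ∈ N, ∀ y' ∈ N, C y ≠ C y' → Disjoint (C y) (C y') := by
    intro y hy y' hy' hne
    rw [Finset.disjoint_left]
    intro z hz hz'
    apply hne
    rw [hmemC] at hz hz'
    have hzN := hz.1
    have hryy' : y' = y ∨ G.Adj y y' := hrtrans y z y' hy hzN hy' hz.2 (hrsymm _ _ hz'.2)
    have hry'y : y = y' ∨ G.Adj y' y := hrsymm _ _ hryy'
    ext u
    rw [hmemC, hmemC]
    constructor
    · rintro ⟨hu, h1⟩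
      exact ⟨hu, hrtrans y' y u hy' hy hu hry'y h1⟩
    · rintro ⟨hu, h1⟩
      exact ⟨hu, hrtrans y y' u hy hy' hu hryy' h1⟩
  -- partition
  set classes := N.image C with hclasses
  have hcover : N = classes.biUnion id := by
    ext z
    simp only [hclasses, Finset.mem_biUnion, Finset.mem_image, id]
    constructor
    · intro hz
      exact ⟨C z, ⟨z, hz, rfl⟩, hCself z hz⟩
    · rintro ⟨t, ⟨y, hy, rfl⟩, hz⟩
      exact hCsub y hz
  have hcard : N.card = classes.card * (a 1 + 1) := by
    rw [hcover, Finset.card_biUnion]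
    · rw [Finset.sum_congr rfl (fun t ht => ?_), Finset.sum_const, smul_eq_mul]
      obtain ⟨y, hy, rfl⟩ := Finset.mem_image.1 ht
      exact hCcard y hy
    · rintro t ht t' ht' hne
      obtain ⟨y, hy, rfl⟩ := Finset.mem_image.1 ht
      obtain ⟨y', hy', rfl⟩ := Finset.mem_image.1 ht'
      exact hCdisj y hy y' hy' hne
  exact ⟨classes.card, by rw [← hk, hcard, mul_comm]⟩

lemma partB (hG : IsDRG G 3 b c a)
    (hv : ∃ v : V → ℝ, v ≠ 0 ∧ (G.adjMatrix ℝ).mulVec v = ((a 3 : ℝ)) • v)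
    (hβ : a 3 = a 1 + 2) : b 0 = 2 * a 3 := by
  obtain ⟨v, hv0, hvec⟩ := hv
  set θ : ℝ := (a 3 : ℝ) with hθ
  set f : ℕ → V → ℝ := fun i x => ∑ z ∈ univ.filter (fun z => G.dist x z = i), v z with hf
  have hAv : ∀ z, (G.adjMatrix ℝ).mulVec v z = θ * v z := by
    intro z; rw [hvec]; simp
  -- swap lemma
  have hswap : ∀ (x : V) (i : ℕ), θ * f i x =
      ∑ w : V, ((univ.filter (fun z => G.Adj w z ∧ G.dist x z = i)).card : ℝ) * v w := by
    intro x i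
    have h1 : θ * f i x = ∑ z ∈ univ.filter (fun z => G.dist x z = i),
        (G.adjMatrix ℝ).mulVec v z := by
      rw [hf, Finset.mul_sum]
      exact Finset.sum_congr rfl fun z _ => (hAv z).symm
    have h2 : ∀ z, (G.adjMatrix ℝ).mulVec v z = ∑ w : V, if G.Adj z w then v w else 0 := by
      intro z
      rw [SimpleGraph.adjMatrix_mulVec_apply, SimpleGraph.neighborFinset_eq_filter,
        Finset.sum_filter]
    rw [h1, Finset.sum_congr rfl fun z _ => h2 z, Finset.sum_comm]
    refine Finset.sum_congr rfl fun w _ => ?_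
    have h3 : (univ.filter (fun z => G.dist x z = i)).filter (fun z => G.Adj z w)
        = univ.filter (fun z => G.Adj w z ∧ G.dist x z = i) := by
      ext z
      simp only [Finset.mem_filter, Finset.mem_univ, true_and]
      rw [G.adj_comm]
      tauto
    rw [← Finset.sum_filter, h3, Finset.sum_const, nsmul_eq_mul]
  -- coefficient extraction
  have hcoef : ∀ (x : V) (j : ℕ) (k : ℝ),
      (∑ w : V, (if G.dist x w = j then k else 0) * v w) = k * f j x := by
    intro x j k
    rw [hf, Finset.mul_sum, Finset.sum_filter]
    exact Finset.sum_congr rfl fun w _ => by rw [ite_mul, zero_mul]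
  -- counting lemmas
  have hcnt3 : ∀ x w : V, ((univ.filter (fun z => G.Adj w z ∧ G.dist x z = 3)).card : ℝ)
      = (if G.dist x w = 2 then ((b 2 : ℕ) : ℝ) else 0)
        + (if G.dist x w = 3 then ((a 3 : ℕ) : ℝ) else 0) := by
    intro x w
    obtain ⟨j, hj⟩ : ∃ j, G.dist x w = j := ⟨_, rfl⟩
    have hjle : j ≤ 3 := hj ▸ hG.le_diam x w
    have hempty : j ≤ 1 → univ.filter (fun z => G.Adj w z ∧ G.dist x z = 3) = ∅ := by
      intro hj1
      rw [Finset.filter_eq_empty_iff]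
      rintro z - ⟨h1, h2⟩
      have ht : G.dist x z ≤ G.dist x w + G.dist w z := hG.connected.dist_triangle
      rw [SimpleGraph.dist_eq_one_iff_adj.2 h1, hj] at ht
      omega
    rw [hj]
    interval_cases j
    · rw [hempty (by norm_num)]; norm_num
    · rw [hempty (by norm_num)]; norm_num
    · have h := hG.card_b 2 (by norm_num) x w hj
      rw [natCard_set_eq'] at h
      simp only [show (2:ℕ)+1 = 3 from rfl] at h
      rw [h]; norm_num
    · have h := hG.card_a 3 (by norm_num) x w hj
      rw [natCard_set_eq'] at h
      rw [h]; norm_num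
  have hcnt1 : ∀ x w : V, ((univ.filter (fun z => G.Adj w z ∧ G.dist x z = 1)).card : ℝ)
      = (if G.dist x w = 0 then ((b 0 : ℕ) : ℝ) else 0)
        + (if G.dist x w = 1 then ((a 1 : ℕ) : ℝ) else 0)
        + (if G.dist x w = 2 then ((c 2 : ℕ) : ℝ) else 0) := by
    intro x w
    obtain ⟨j, hj⟩ : ∃ j, G.dist x w = j := ⟨_, rfl⟩
    have hjle : j ≤ 3 := hj ▸ hG.le_diam x w
    rw [hj]
    interval_cases j
    · have h := hG.card_b 0 (by norm_num) x w hj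
      rw [natCard_set_eq'] at h
      simp only [show (0:ℕ)+1 = 1 from rfl] at h
      rw [h]; norm_num
    · have h := hG.card_a 1 (by norm_num) x w hj
      rw [natCard_set_eq'] at h
      rw [h]; norm_num
    · have h := hG.card_c 2 (by norm_num) x w hj
      rw [natCard_set_eq'] at h
      simp only [show (2:ℕ)-1 = 1 from rfl] at h
      rw [h]; norm_num
    · have hempty : univ.filter (fun z => G.Adj w z ∧ G.dist x z = 1) = ∅ := by
        rw [Finset.filter_eq_empty_iff]
        rintro z - ⟨h1, h2⟩
        have ht : G.dist x w ≤ G.dist x z + G.dist z w := hG.connected.dist_triangle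
        rw [SimpleGraph.dist_eq_one_iff_adj.2 h1.symm, hj, h2] at ht
        omega
      rw [hempty]; norm_num
  have hcnt0 : ∀ x w : V, ((univ.filter (fun z => G.Adj w z ∧ G.dist x z = 0)).card : ℝ)
      = (if G.dist x w = 1 then (1 : ℝ) else 0) := by
    intro x w
    have hzx : ∀ z : V, G.dist x z = 0 ↔ z = x := by
      intro z
      rw [hG.connected.dist_eq_zero_iff, eq_comm]
    by_cases hj : G.dist x w = 1
    · rw [if_pos hj]
      have : univ.filter (fun z => G.Adj w z ∧ G.dist x z = 0) = {x} := by
        ext z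
        simp only [Finset.mem_filter, Finset.mem_univ, true_and, Finset.mem_singleton]
        constructor
        · rintro ⟨-, h2⟩; exact (hzx z).1 h2
        · rintro rfl
          exact ⟨(SimpleGraph.dist_eq_one_iff_adj.1 hj).symm, (hzx _).2 rfl⟩
      rw [this, Finset.card_singleton]; norm_num
    · rw [if_neg hj]
      have : univ.filter (fun z => G.Adj w z ∧ G.dist x z = 0) = ∅ := by
        rw [Finset.filter_eq_empty_iff]
        rintro z - ⟨h1, h2⟩
        obtain rfl := (hzx z).1 h2
        exact hj (SimpleGraph.dist_eq_one_iff_adj.2 h1.symm)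
      rw [this]; norm_num
  -- f 0 x = v x
  have hf0 : ∀ x : V, f 0 x = v x := by
    intro x
    have h1 : univ.filter (fun z => G.dist x z = 0) = {x} := by
      ext z
      simp only [Finset.mem_filter, Finset.mem_univ, true_and, Finset.mem_singleton,
        hG.connected.dist_eq_zero_iff, eq_comm]
    calc f 0 x = ∑ z ∈ univ.filter (fun z => G.dist x z = 0), v z := rfl
    _ = v x := by rw [h1, Finset.sum_singleton]
  -- the three equations
  have hE0 : ∀ x : V, θ * v x = f 1 x := by
    intro x
    have h := hswap x 0
    rw [hf0 x] at h
    rw [h, Finset.sum_congr rfl fun w _ => by rw [hcnt0 x w]]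
    rw [hcoef x 1 1, one_mul]
  have hE3 : ∀ x : V, θ * f 3 x = (b 2 : ℝ) * f 2 x + (a 3 : ℝ) * f 3 x := by
    intro x
    calc θ * f 3 x
        = ∑ w : V, ((univ.filter (fun z => G.Adj w z ∧ G.dist x z = 3)).card : ℝ) * v w :=
          hswap x 3
      _ = ∑ w : V, ((if G.dist x w = 2 then ((b 2 : ℕ) : ℝ) else 0) * v w
            + (if G.dist x w = 3 then ((a 3 : ℕ) : ℝ) else 0) * v w) := by
          refine Finset.sum_congr rfl fun w _ => ?_
          rw [hcnt3 x w, add_mul]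
      _ = (∑ w : V, (if G.dist x w = 2 then ((b 2 : ℕ) : ℝ) else 0) * v w)
            + ∑ w : V, (if G.dist x w = 3 then ((a 3 : ℕ) : ℝ) else 0) * v w :=
          Finset.sum_add_distrib
      _ = (b 2 : ℝ) * f 2 x + (a 3 : ℝ) * f 3 x := by rw [hcoef, hcoef]
  have hE1 : ∀ x : V, θ * f 1 x
      = (b 0 : ℝ) * f 0 x + (a 1 : ℝ) * f 1 x + (c 2 : ℝ) * f 2 x := by
    intro x
    calc θ * f 1 x
        = ∑ w : V, ((univ.filter (fun z => G.Adj w z ∧ G.dist x z = 1)).card : ℝ) * v w :=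
          hswap x 1
      _ = ∑ w : V, ((if G.dist x w = 0 then ((b 0 : ℕ) : ℝ) else 0) * v w
            + (if G.dist x w = 1 then ((a 1 : ℕ) : ℝ) else 0) * v w
            + (if G.dist x w = 2 then ((c 2 : ℕ) : ℝ) else 0) * v w) := by
          refine Finset.sum_congr rfl fun w _ => ?_
          rw [hcnt1 x w, add_mul, add_mul]
      _ = ((∑ w : V, (if G.dist x w = 0 then ((b 0 : ℕ) : ℝ) else 0) * v w)
            + ∑ w : V, (if G.dist x w = 1 then ((a 1 : ℕ) : ℝ) else 0) * v w)
            + ∑ w : V, (if G.dist x w = 2 then ((c 2 : ℕ) : ℝ) else 0) * v w := by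
          rw [Finset.sum_add_distrib, Finset.sum_add_distrib]
      _ = (b 0 : ℝ) * f 0 x + (a 1 : ℝ) * f 1 x + (c 2 : ℝ) * f 2 x := by
          rw [hcoef, hcoef, hcoef]
  -- b 2 is positive
  have hb2 : b 2 ≠ 0 := by
    obtain ⟨x0, w0, h3⟩ := hG.exists_diam
    have hr : G.Reachable x0 w0 := hG.connected x0 w0
    obtain ⟨p, hp⟩ := hr.exists_walk_length_eq_dist
    have hql : p.reverse.length = 3 := by rw [SimpleGraph.Walk.length_reverse, hp, h3]
    have hqn : ¬ p.reverse.Nil := SimpleGraph.Walk.not_nil_iff_lt_length.2 (by omega)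
    have hadj : G.Adj w0 (p.reverse.getVert 1) := p.reverse.adj_snd hqn
    have hd1 : G.dist (p.reverse.getVert 1) w0 = 1 := SimpleGraph.dist_eq_one_iff_adj.2 hadj.symm
    have hd2 : G.dist x0 (p.reverse.getVert 1) = 2 := by
      have h1 : G.dist (p.reverse.getVert 1) x0 ≤ 2 := by
        have ha : G.dist (p.reverse.getVert 1) x0 ≤ _ := SimpleGraph.dist_le p.reverse.tail
        have hb := SimpleGraph.Walk.length_tail_add_one hqn
        omega
      have ht : G.dist x0 w0 ≤ G.dist x0 (p.reverse.getVert 1) + G.dist (p.reverse.getVert 1) w0 :=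
        hG.connected.dist_triangle
      rw [SimpleGraph.dist_comm] at h1
      omega
    have h := hG.card_b 2 (by norm_num) x0 (p.reverse.getVert 1) hd2
    rw [natCard_set_eq'] at h
    have hmem : w0 ∈ univ.filter (fun z => G.Adj (p.reverse.getVert 1) z ∧ G.dist x0 z = 2 + 1) := by
      simp only [Finset.mem_filter, Finset.mem_univ, true_and]
      exact ⟨hadj.symm, h3⟩
    have := Finset.card_pos.2 ⟨w0, hmem⟩
    omega
  -- f 2 = 0
  have hf2 : ∀ x : V, f 2 x = 0 := by
    intro x
    have h := hE3 x
    rw [hθ] at h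
    have h2 : (b 2 : ℝ) * f 2 x = 0 := by linarith
    rcases mul_eq_zero.1 h2 with h3 | h3
    · exact absurd (Nat.cast_eq_zero.1 h3) hb2
    · exact h3
  -- conclude
  obtain ⟨x, hx⟩ := Function.ne_iff.1 hv0
  have h1 := hE1 x
  rw [hf0 x, hf2 x, ← hE0 x, mul_zero, add_zero] at h1
  have hcast : θ = (a 1 : ℝ) + 2 := by
    rw [hθ, hβ]; push_cast; ring
  have hfinal : ((b 0 : ℝ) - 2 * θ) * v x = 0 := by
    linear_combination (θ * v x) * hcast - h1
  rcases mul_eq_zero.1 hfinal with h3 | h3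
  · have : (b 0 : ℝ) = 2 * (a 3 : ℝ) := by rw [← hθ]; linarith
    exact_mod_cast this
  · exact absurd h3 (by simpa using hx)

end Aux

/-- A Shilla distance-regular graph with `c₂ = 1` and `b(Γ) = a₃ - a₁ = 2` has
`(a₁ + 1) ∣ k` and `a₃ ∈ {2, 3}`. -/
theorem stmt19 {V : Type*} [Fintype V] [DecidableEq V] (G : SimpleGraph V)
    [DecidableRel G.Adj] (b c a : ℕ → ℕ) (hG : IsShilla G b c a)
    (hc2 : c 2 = 1) (hβ : a 3 = a 1 + 2) :
    (a 1 + 1) ∣ b 0 ∧ (a 3 = 2 ∨ a 3 = 3) := by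
  have hA : (a 1 + 1) ∣ b 0 := partA hG.drg hc2
  have hB : b 0 = 2 * a 3 := partB hG.drg hG.second.1 hβ
  refine ⟨hA, ?_⟩
  have h2 : (a 1 + 1) ∣ 2 := by
    have hsub : (a 1 + 1) ∣ (b 0 - 2 * (a 1 + 1)) := Nat.dvd_sub hA ⟨2, Nat.mul_comm _ _⟩
    have : b 0 - 2 * (a 1 + 1) = 2 := by omega
    rwa [this] at hsub
  have := Nat.le_of_dvd (by norm_num) h2
  omega
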